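/- The number of b in GF(q⁴) with Tr_{GF(q⁴)/GF(q)}(b) = 1 and Tr_{GF(q²)/GF(2)}(b^{q²+1}) = i equals q³/2, for each i ∈ {0,1}. -/

import Mathlib

open Finset Polynomial

set_option linter.unusedSectionVars false
set_option maxHeartbeats 1000000

section AuxStmt15

variable {F : Type*} [Field F] [Fintype F] [DecidableEq F]

private def gsum15 (n : ℕ) (x : F) : F := ∑ j ∈ Finset.range n, x^(2^j)

private lemma gsum15_add [CharP F 2] (n : ℕ) (x y : F) :
    gsum15 n (x + y) = gsum15 n x + gsum15 n y := by
  unfold gsum15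
  rw [← Finset.sum_add_distrib]
  exact Finset.sum_congr rfl fun j _ => add_pow_char_pow ..

private lemma gsum15_shift (n : ℕ) (x : F) :
    gsum15 n (x^2) + x = gsum15 n x + x^(2^n) := by
  have h2 := Finset.sum_range_succ' (fun j => x^(2^j)) n
  rw [Finset.sum_range_succ] at h2
  unfold gsum15
  rw [Finset.sum_congr rfl fun j _ =>
    (by rw [← pow_mul, pow_succ, mul_comm 2 (2^j), pow_mul] : (x^2)^(2^j) = x^(2^(j+1)))]
  simpa using h2.symm

private lemma gsum15_split (m n : ℕ) (x : F) :
    gsum15 (m + n) x = gsum15 m x + gsum15 n (x^(2^m)) := by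
  unfold gsum15
  rw [Finset.sum_range_add]
  congr 1
  exact Finset.sum_congr rfl fun j _ => by rw [← pow_mul, ← pow_add]

private lemma gsum15_sq [CharP F 2] (n : ℕ) (x : F) : (gsum15 n x)^2 = gsum15 n (x^2) := by
  unfold gsum15
  rw [sum_pow_char]
  exact Finset.sum_congr rfl fun j _ => by rw [← pow_mul, mul_comm, pow_mul]

private lemma gsum15_01 [CharP F 2] (n : ℕ) (c : F) (hc : c^(2^n) = c) :
    gsum15 n c = 0 ∨ gsum15 n c = 1 := by
  have hcc : c + c = 0 := CharTwo.add_self_eq_zero c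
  have hsq : (gsum15 n c)^2 = gsum15 n c := by
    rw [gsum15_sq]
    have h := gsum15_shift n c
    rw [hc] at h
    have h2 : gsum15 n (c^2) = gsum15 n c + c + c := by linear_combination h - hcc
    rw [h2, add_assoc, hcc, add_zero]
  have hz : gsum15 n c * (gsum15 n c - 1) = 0 := by linear_combination hsq
  rcases mul_eq_zero.mp hz with h | h
  · exact Or.inl h
  · exact Or.inr (by linear_combination h)

private lemma gsum15_four [CharP F 2] (k : ℕ) (x : F) :
    gsum15 (4*k) x = gsum15 k x + gsum15 k (x^(2^k)) + gsum15 k (x^(2^(k*2)))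
      + gsum15 k (x^(2^(k*3))) := by
  have p1 : ((x^(2^k))^(2^k)) = x^(2^(k*2)) := by rw [← pow_mul, ← pow_add]; ring_nf
  have p2 : ((x^(2^(k*2)))^(2^k)) = x^(2^(k*3)) := by rw [← pow_mul, ← pow_add]; ring_nf
  rw [show 4*k = k + (k + (k + k)) from by ring, gsum15_split, gsum15_split, gsum15_split,
    p1, p2]
  ring

private lemma poly_count15 (p : F[X]) (hp : p ≠ 0) :
    (univ.filter fun x => p.eval x = 0).card ≤ p.natDegree := by
  have hsub : (univ.filter fun x => p.eval x = 0) ⊆ p.roots.toFinset := by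
    intro x hx
    simp only [mem_filter, mem_univ, true_and] at hx
    simp [Polynomial.mem_roots, hp, hx, Polynomial.IsRoot]
  exact (Finset.card_le_card hsub).trans ((Multiset.toFinset_card_le _).trans (p.card_roots'))

private lemma char_two15 (k : ℕ) (hk : 0 < k) (hF : Fintype.card F = 2^k) : CharP F 2 := by
  have h0 : ((Fintype.card F : ℕ) : F) = 0 := Nat.cast_card_eq_zero F
  rw [hF] at h0
  push_cast at h0
  have h2 : (2 : F) = 0 := pow_eq_zero_iff hk.ne' |>.mp h0
  have := CharP.ringChar_of_prime_eq_zero Nat.prime_two h2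
  exact this ▸ ringChar.charP F

private lemma count_main15 (k : ℕ) (hk : 0 < k) [CharP F 2] (hF : Fintype.card F = (2^k)^4) :
    ((univ.filter fun x : F => x^(2^k) = x).card = 2^k) ∧
    ((univ.filter fun b : F => b + b^(2^k) + b^((2^k)^2) + b^((2^k)^3) = 1).card = (2^k)^3) := by
  set q : ℕ := 2^k with hq
  have hq1 : 1 < q := Nat.one_lt_two_pow hk.ne'
  have hq0 : 0 < q := by omega
  have e2 : q^2 < q^3 := Nat.pow_lt_pow_right hq1 (by norm_num)
  have e1 : q < q^3 := by
    calc q = q^1 := (pow_one q).symm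
      _ < q^3 := Nat.pow_lt_pow_right hq1 (by norm_num)
  have e0 : 1 < q^3 := lt_of_lt_of_le hq1 (Nat.le_self_pow (by norm_num) q)
  set T : F → F := fun b => b + b^q + b^(q^2) + b^(q^3) with hT
  have keym : ∀ (m : ℕ) (x y : F), (x+y)^(q^m) = x^(q^m) + y^(q^m) := by
    intro m x y
    have h : q^m = 2^(k*m) := by rw [hq, pow_mul]
    rw [h]; exact add_pow_char_pow ..
  have key1 : ∀ (x y : F), (x+y)^q = x^q + y^q := by
    intro x y
    have := keym 1 x y
    rwa [pow_one] at this
  have hfib : ∀ c : F, (univ.filter fun b => T b = c).card ≤ q^3 := by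
    intro c
    set P : F[X] := X^(q^3) + X^(q^2) + X^q + X - C c with hP
    have hdeg : P.natDegree = q^3 := by
      rw [hP]
      compute_degree!
      · rw [if_neg e2.ne', if_neg e1.ne', if_neg (by omega : ¬ 1 = q^3),
          if_neg (by omega : ¬ q = 0)]
        norm_num
      · exact e1.le
      · exact e2.le
      · exact ⟨e2.le, e1.le, e0.le⟩
    have hne : P ≠ 0 := fun h => by
      rw [h, natDegree_zero] at hdeg; omega
    have heq : (univ.filter fun b => T b = c) = (univ.filter fun x => P.eval x = 0) := by
      apply Finset.filter_congr
      intro x _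
      simp only [hP, hT, eval_sub, eval_add, eval_pow, eval_X, eval_C, sub_eq_zero]
      constructor <;> intro h <;> linear_combination h
    rw [heq, ← hdeg]
    exact poly_count15 P hne
  have hKcard : (univ.filter fun x : F => x^q = x).card ≤ q := by
    set P : F[X] := X^q - X with hP
    have hdeg : P.natDegree = q := by
      rw [hP]
      compute_degree! <;>
        first
          | (rw [if_neg (by omega : ¬ 1 = q)]; simp)
          | omega
    have hne : P ≠ 0 := fun h => by
      rw [h, natDegree_zero] at hdeg; omega
    have heq : (univ.filter fun x : F => x^q = x) = (univ.filter fun x => P.eval x = 0) := by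
      apply Finset.filter_congr
      intro x _
      simp [hP, sub_eq_zero]
    rw [heq, ← hdeg]
    exact poly_count15 P hne
  have hpow4 : ∀ b : F, b ^ (q^4) = b := by
    intro b; rw [← hF]; exact FiniteField.pow_card b
  have hTK : ∀ b : F, (T b)^q = T b := by
    intro b
    have f1 : (b^q)^q = b^(q^2) := by rw [← pow_mul, ← pow_two]
    have f2 : (b^(q^2))^q = b^(q^3) := by rw [← pow_mul, ← pow_succ]
    have f3 : (b^(q^3))^q = b := by rw [← pow_mul, ← pow_succ, hpow4]
    have h : (T b)^q = b^q + (b^q)^q + (b^(q^2))^q + (b^(q^3))^q := by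
      simp only [hT]
      rw [key1, key1, key1]
    rw [h, f1, f2, f3]
    simp only [hT]; ring
  have himgsub : univ.image T ⊆ (univ.filter fun x : F => x^q = x) := by
    intro c hc
    obtain ⟨b, _, rfl⟩ := Finset.mem_image.mp hc
    simp only [mem_filter, mem_univ, true_and]
    exact hTK b
  have hsum : ∑ c ∈ univ.image T, (univ.filter fun b => T b = c).card = q^4 := by
    rw [← hF, ← Finset.card_univ]
    exact (Finset.card_eq_sum_card_fiberwise fun x _ => Finset.mem_image_of_mem T (mem_univ x)).symm
  have hub : q^4 ≤ (univ.image T).card * q^3 := by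
    calc q^4 = ∑ c ∈ univ.image T, (univ.filter fun b => T b = c).card := hsum.symm
      _ ≤ ∑ _c ∈ univ.image T, q^3 := Finset.sum_le_sum fun c _ => hfib c
      _ = (univ.image T).card * q^3 := by rw [Finset.sum_const, smul_eq_mul]
  have himgq : q ≤ (univ.image T).card := by
    have h3 : 0 < q^3 := by positivity
    have h : q * q^3 ≤ (univ.image T).card * q^3 := by
      calc q * q^3 = q^4 := by ring
        _ ≤ _ := hub
    exact Nat.le_of_mul_le_mul_right h h3
  have himgcard : (univ.image T).card = q :=
    le_antisymm ((Finset.card_le_card himgsub).trans hKcard) himgq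
  have hKq : (univ.filter fun x : F => x^q = x).card = q :=
    le_antisymm hKcard (by
      calc q = (univ.image T).card := himgcard.symm
        _ ≤ _ := Finset.card_le_card himgsub)
  have himgK : univ.image T = (univ.filter fun x : F => x^q = x) :=
    Finset.eq_of_subset_of_card_le himgsub (by omega)
  have hTadd : ∀ x y : F, T (x + y) = T x + T y := by
    intro x y
    simp only [hT]
    rw [key1, keym 2, keym 3]
    ring
  set N := (univ.filter fun b => T b = 0).card with hN
  have hfibN : ∀ c ∈ univ.image T, (univ.filter fun b => T b = c).card = N := by
    intro c hc
    obtain ⟨bc, _, rfl⟩ := Finset.mem_image.mp hc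
    rw [hN]
    symm
    apply Finset.card_bij' (fun a _ => a + bc) (fun a _ => a - bc)
    · intro a ha
      simp only [mem_filter, mem_univ, true_and] at ha ⊢
      rw [hTadd, ha, zero_add]
    · intro a ha
      simp only [mem_filter, mem_univ, true_and] at ha ⊢
      have h := hTadd (a - bc) bc
      rw [sub_add_cancel] at h
      linear_combination ha - h
    · intro a _; exact add_sub_cancel_right a bc
    · intro a _; exact sub_add_cancel a bc
  have hNval : q * N = q^4 := by
    rw [← hsum, Finset.sum_congr rfl hfibN, Finset.sum_const, smul_eq_mul, himgcard]
  have hN3 : N = q^3 := by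
    have h : q * N = q * q^3 := by rw [hNval]; ring
    exact Nat.eq_of_mul_eq_mul_left hq0 h
  refine ⟨hKq, ?_⟩
  have h1K : (1 : F) ∈ univ.image T := by
    rw [himgK]
    simp
  have hres := hfibN 1 h1K
  rw [hN3] at hres
  exact hres

private lemma exists_t15 (k : ℕ) (hk : 0 < k) [CharP F 2]
    (hK : (univ.filter fun x : F => x^(2^k) = x).card = 2^k) :
    ∃ t : F, t^(2^k) = t ∧ gsum15 k t = 1 := by
  by_contra hcon
  push_neg at hcon
  have hall : ∀ t : F, t^(2^k) = t → gsum15 k t = 0 := by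
    intro t ht
    rcases gsum15_01 k t ht with h | h
    · exact h
    · exact absurd h (hcon t ht)
  set P : F[X] := ∑ j ∈ Finset.range k, X^(2^j) with hP
  have hdeg : P.natDegree ≤ 2^(k-1) := by
    apply Polynomial.natDegree_sum_le_of_forall_le
    intro j hj
    rw [natDegree_X_pow]
    exact Nat.pow_le_pow_right (by norm_num) (by simp at hj; omega)
  have hco : P.coeff (2^(k-1)) = 1 := by
    rw [hP, finset_sum_coeff]
    rw [Finset.sum_eq_single (k-1)]
    · simp [coeff_X_pow]
    · intro j hj hne
      rw [coeff_X_pow, if_neg]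
      exact fun h => hne (Nat.pow_right_injective (le_refl 2) h.symm)
    · intro h; exact absurd (Finset.mem_range.mpr (by omega)) h
  have hne : P ≠ 0 := by
    intro h; rw [h] at hco; simp at hco
  have hsub : (univ.filter fun x : F => x^(2^k) = x) ⊆ (univ.filter fun x => P.eval x = 0) := by
    intro x hx
    simp only [mem_filter, mem_univ, true_and] at hx ⊢
    have h := hall x hx
    rw [hP, eval_finset_sum]
    simpa [gsum15] using h
  have hle := (Finset.card_le_card hsub).trans ((poly_count15 P hne).trans hdeg)
  rw [hK] at hle
  have : 2^(k-1) < 2^k := Nat.pow_lt_pow_right one_lt_two (by omega)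
  omega

end AuxStmt15

theorem stmt15 (k : ℕ) (hk : 0 < k) (q : ℕ) (hq : q = 2^k) {F : Type*} [Field F] [Fintype F] [DecidableEq F] (hF : Fintype.card F = q^4) (i : F) (hi : i = 0 ∨ i = 1) :
    (Finset.univ.filter (fun b : F => (b + b^q + b^(q^2) + b^(q^3)) = 1 ∧ (∑ i ∈ Finset.range (2*k), (b^(q^2+1))^(2^i)) = i)).card = q^3 / 2 := by
  subst hq
  haveI : CharP F 2 := char_two15 (k*4) (by omega) (by rw [hF, ← pow_mul])
  obtain ⟨hK, hS⟩ := count_main15 k hk hF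
  obtain ⟨t, ht1, ht2⟩ := exists_t15 k hk hK
  set T : F → F := fun b => b + b^(2^k) + b^((2^k)^2) + b^((2^k)^3) with hT
  set fB : F → F := fun b => gsum15 (2*k) (b^((2^k)^2+1)) with hfB
  -- t is fixed by all powers of frobenius^k
  have tfix : ∀ m : ℕ, t^((2^k)^m) = t := by
    intro m
    induction m with
    | zero => simp
    | succ n ih => rw [pow_succ, pow_mul, ih, ht1]
  have tfix' : ∀ m : ℕ, t^(2^(k*m)) = t := fun m => by rw [pow_mul]; exact tfix m
  have hpow4 : ∀ b : F, b ^ ((2^k)^4) = b := by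
    intro b; rw [← hF]; exact FiniteField.pow_card b
  have htt : ∀ x : F, x + x = 0 := fun x => CharTwo.add_self_eq_zero x
  -- fB takes values in {0,1}
  have hc_fix : ∀ b : F, (b^((2^k)^2+1))^(2^(2*k)) = b^((2^k)^2+1) := by
    intro b
    rw [show 2*k = k*2 from by ring, pow_mul 2 k 2, ← pow_mul]
    rw [show ((2^k)^2+1) * (2^k)^2 = (2^k)^4 + (2^k)^2 from by ring, pow_add, hpow4]
    rw [pow_succ', pow_add]
    ring
  have hf01 : ∀ b : F, fB b = 0 ∨ fB b = 1 := fun b =>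
    gsum15_01 (2*k) _ (hc_fix b)
  -- T is additive; T t = 0
  have keym : ∀ (m : ℕ) (x y : F), (x+y)^((2^k)^m) = x^((2^k)^m) + y^((2^k)^m) := by
    intro m x y
    rw [← pow_mul]
    exact add_pow_char_pow ..
  have key1 : ∀ (x y : F), (x+y)^(2^k) = x^(2^k) + y^(2^k) := fun x y => add_pow_char_pow ..
  have hTt : T t = 0 := by
    simp only [hT]
    rw [ht1, tfix 2, tfix 3, htt, zero_add, htt]
  have hTadd : ∀ x y : F, T (x + y) = T x + T y := by
    intro x y
    simp only [hT]
    rw [key1, keym 2, keym 3]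
    ring
  -- the swap property
  have hswap : ∀ b : F, T b = 1 → fB (b + t) = fB b + 1 := by
    intro b hb
    have e1 : (b+t)^((2^k)^2) = b^((2^k)^2) + t := by rw [keym 2, tfix 2]
    have e2 : (b+t)^((2^k)^2+1) = b^((2^k)^2+1) + (t*b^((2^k)^2) + (t*b + t*t)) := by
      rw [pow_succ (b+t) ((2^k)^2), pow_succ b ((2^k)^2), e1]; ring
    have hA : gsum15 (2*k) (t*b^((2^k)^2)) = gsum15 (2*k) ((t*b)^(2^(2*k))) := by
      congr 1
      rw [mul_pow, show 2*k = k*2 from by ring, tfix' 2, pow_mul]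
    have hsplit22 : gsum15 (4*k) (t*b)
        = gsum15 (2*k) (t*b) + gsum15 (2*k) ((t*b)^(2^(2*k))) := by
      rw [show 4*k = 2*k + 2*k from by ring, gsum15_split]
    have hB : gsum15 (4*k) (t*b) = 1 := by
      rw [gsum15_four]
      have m1 : (t*b)^(2^k) = t * b^(2^k) := by rw [mul_pow, ht1]
      have m2 : (t*b)^(2^(k*2)) = t * b^((2^k)^2) := by rw [mul_pow, tfix' 2, pow_mul]
      have m3 : (t*b)^(2^(k*3)) = t * b^((2^k)^3) := by rw [mul_pow, tfix' 3, pow_mul]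
      rw [m1, m2, m3, ← gsum15_add, ← gsum15_add, ← gsum15_add]
      rw [show t*b + t*b^(2^k) + t*b^((2^k)^2) + t*b^((2^k)^3) = t * T b from by simp only [hT]; ring]
      rw [hb, mul_one, ht2]
    have hC : gsum15 (2*k) (t*t) = 0 := by
      have hsh := gsum15_shift (2*k) t
      rw [show 2*k = k*2 from by ring] at hsh
      rw [tfix' 2] at hsh
      have h2 : gsum15 (k*2) (t^2) = gsum15 (k*2) t := by
        have := add_right_cancel hsh
        exact this
      have h3 : gsum15 (k*2) t = 0 := by
        rw [show k*2 = k + k from by ring, gsum15_split, ht1, ht2, htt]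
      rw [show t*t = t^2 from (sq t).symm, show 2*k = k*2 from by ring, h2, h3]
    simp only [hfB]
    rw [e2, gsum15_add, gsum15_add, gsum15_add, hC, add_zero]
    have : gsum15 (2*k) (t*b^((2^k)^2)) + gsum15 (2*k) (t*b) = 1 := by
      rw [hA, add_comm, ← hsplit22, hB]
    linear_combination this
  -- swap preserves T = 1
  have hTswap : ∀ b : F, T b = 1 → T (b + t) = 1 := by
    intro b hb
    rw [hTadd, hb, hTt, add_zero]
  have hinv : ∀ b : F, b + t + t = b := by
    intro b; rw [add_assoc, htt, add_zero]
  -- the two pieces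
  classical
  set P0 : Finset F := univ.filter (fun b => T b = 1 ∧ fB b = 0) with hP0
  set P1 : Finset F := univ.filter (fun b => T b = 1 ∧ fB b = 1) with hP1
  have hbij : P0.card = P1.card := by
    apply Finset.card_bij' (fun b _ => b + t) (fun b _ => b + t)
    · intro a ha
      simp only [hP0, hP1, mem_filter, mem_univ, true_and] at ha ⊢
      refine ⟨hTswap a ha.1, ?_⟩
      rw [hswap a ha.1, ha.2, zero_add]
    · intro a ha
      simp only [hP0, hP1, mem_filter, mem_univ, true_and] at ha ⊢
      refine ⟨hTswap a ha.1, ?_⟩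
      rw [hswap a ha.1, ha.2, htt]
    · intro a _; exact hinv a
    · intro a _; exact hinv a
  have hsplit : P0.card + P1.card = (2^k)^3 := by
    rw [← hS, hP0, hP1]
    rw [show (univ.filter (fun b : F => T b = 1 ∧ fB b = 0))
        = (univ.filter (fun b : F => T b = 1)).filter (fun b => fB b = 0) from by
      rw [Finset.filter_filter]]
    rw [show (univ.filter (fun b : F => T b = 1 ∧ fB b = 1))
        = (univ.filter (fun b : F => T b = 1)).filter (fun b => ¬ fB b = 0) from by
      rw [Finset.filter_filter]
      apply Finset.filter_congr
      intro x _
      rcases hf01 x with h | h <;> simp [h]]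
    exact Finset.card_filter_add_card_filter_not _
  have harith : (2:ℕ)^(k*3) = 2 * 2^(k*3-1) := by
    have h := pow_succ' 2 (k*3-1)
    rwa [show k*3-1+1 = k*3 from by omega] at h
  have hq3 : ((2:ℕ)^k)^3 = 2^(k*3) := by rw [pow_mul]
  obtain ⟨B, hB⟩ : ∃ B, (2:ℕ)^(k*3) = 2*B := ⟨_, harith⟩
  rcases hi with rfl | rfl
  · show P0.card = ((2:ℕ)^k)^3 / 2
    rw [hq3, hB] at hsplit ⊢
    omega
  · show P1.card = ((2:ℕ)^k)^3 / 2
    rw [hq3, hB] at hsplit ⊢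
    omega
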